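/- Let U_1,...,U_n be independent Rademacher random variables (uniform on {−1,+1}) and c_1,...,c_n ≥ 0 fixed nonnegative reals bounded by c_i ≤ M. Then for any a, b > 0, P{|(1/n)∑ U_i c_i| > a + b·(1/n)∑ c_i} ≤ 2 exp(−2nab/M). -/

import Mathlib

open MeasureTheory ProbabilityTheory

lemma radem_exp_int {Ω : Type*} [MeasurableSpace Ω] (μ : Measure Ω) [IsProbabilityMeasure μ]
    (U : Ω → ℝ) (hU : Measurable U) (h1 : μ (U ⁻¹' {1}) = 1 / 2) (h2 : μ (U ⁻¹' {-1}) = 1 / 2)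
    (r s : ℝ) :
    Integrable (fun ω => Real.exp (s * (U ω * r))) μ ∧
      ∫ ω, Real.exp (s * (U ω * r)) ∂μ = Real.cosh (s * r) := by
  set A := U ⁻¹' {1} with hA_def
  set B := U ⁻¹' {-1} with hB_def
  have hA : MeasurableSet A := hU (measurableSet_singleton 1)
  have hB : MeasurableSet B := hU (measurableSet_singleton (-1))
  have hdisj : Disjoint A B := by
    refine Set.disjoint_left.mpr fun ω hω1 hω2 => ?_
    simp only [hA_def, hB_def, Set.mem_preimage, Set.mem_singleton_iff] at hω1 hω2
    rw [hω1] at hω2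
    norm_num at hω2
  have hunion : μ (A ∪ B) = 1 := by
    rw [measure_union hdisj hB, h1, h2]
    rw [ENNReal.div_add_div_same, one_add_one_eq_two]
    exact ENNReal.div_self two_ne_zero ENNReal.ofNat_ne_top
  have hae : ∀ᵐ ω ∂μ, ω ∈ A ∪ B := by
    have : μ (A ∪ B)ᶜ = 0 := by
      rw [prob_compl_eq_zero_iff (hA.union hB)]
      exact hunion
    filter_upwards [measure_eq_zero_iff_ae_notMem.mp this] with ω hω
    exact Set.not_notMem.mp hω
  set g : Ω → ℝ := A.indicator (fun _ => Real.exp (s * r)) +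
      B.indicator (fun _ => Real.exp (-(s * r))) with hg_def
  have hfg : (fun ω => Real.exp (s * (U ω * r))) =ᵐ[μ] g := by
    filter_upwards [hae] with ω hω
    rcases hω with hω | hω
    · have hU1 : U ω = 1 := hω
      have hωB : ω ∉ B := Set.disjoint_left.mp hdisj hω
      simp [hg_def, Set.indicator_of_mem hω, Set.indicator_of_notMem hωB, hU1]
    · have hU1 : U ω = -1 := hω
      have hωA : ω ∉ A := Set.disjoint_right.mp hdisj hω
      simp [hg_def, Set.indicator_of_mem hω, Set.indicator_of_notMem hωA, hU1]
  have hgint : Integrable g μ :=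
    ((integrable_const _).indicator hA).add ((integrable_const _).indicator hB)
  refine ⟨hgint.congr hfg.symm, ?_⟩
  rw [integral_congr_ae hfg, hg_def]
  simp only [Pi.add_apply]
  rw [integral_add ((integrable_const _).indicator hA) ((integrable_const _).indicator hB),
    integral_indicator_const _ hA, integral_indicator_const _ hB, measureReal_def,
    measureReal_def, h1, h2]
  have : (((1 : ENNReal) / 2)).toReal = (1 / 2 : ℝ) := by simp
  rw [this, Real.cosh_eq]
  simp only [smul_eq_mul]
  ring

/-- Hoeffding's inequality for Rademacher averages: for independent Rademacher variables `Uᵢ`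
and fixed `0 ≤ cᵢ ≤ M`, `P{|(1/n) ∑ Uᵢ cᵢ| > a + b (1/n) ∑ cᵢ} ≤ 2 exp(-2 n a b / M)`. -/
theorem rademacher_weighted_tail
    {Ω : Type*} [MeasurableSpace Ω] (μ : Measure Ω) [IsProbabilityMeasure μ]
    (n : ℕ) (hn : 0 < n) (U : Fin n → Ω → ℝ)
    (hmeas : ∀ i, Measurable (U i))
    (hindep : iIndepFun U μ)
    (hrad : ∀ i, μ (U i ⁻¹' {1}) = 1 / 2 ∧ μ (U i ⁻¹' {-1}) = 1 / 2)
    (c : Fin n → ℝ) (M : ℝ) (hM : 0 < M) (hc0 : ∀ i, 0 ≤ c i) (hcM : ∀ i, c i ≤ M)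
    (a b : ℝ) (ha : 0 < a) (hb : 0 < b) :
    μ {ω | a + b * ((1 / (n : ℝ)) * ∑ i, c i) < |(1 / (n : ℝ)) * ∑ i, U i ω * c i|} ≤
      ENNReal.ofReal (2 * Real.exp (-(2 * (n : ℝ) * a * b) / M)) := by
  have hn' : (0 : ℝ) < n := Nat.cast_pos.mpr hn
  set C : ℝ := ∑ i, c i with hC_def
  set X : Fin n → Ω → ℝ := fun i ω => U i ω * c i with hX_def
  have hXmeas : ∀ i, Measurable (X i) := fun i => (hmeas i).mul_const _
  have hXindep : iIndepFun X μ :=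
    hindep.comp (fun i x => x * c i) (fun i => measurable_mul_const _)
  set S : Ω → ℝ := ∑ i, X i with hS_def
  have hSapp : ∀ ω, S ω = ∑ i, U i ω * c i := by
    intro ω; simp [hS_def, hX_def, Finset.sum_apply]
  set ε : ℝ := n * a + b * C with hε_def
  have hεpos : 0 < ε := by
    have hC0 : 0 ≤ C := Finset.sum_nonneg fun i _ => hc0 i
    have := mul_pos hn' ha
    nlinarith
  -- rewrite the event
  have hevent : {ω | a + b * ((1 / (n : ℝ)) * ∑ i, c i) <
      |(1 / (n : ℝ)) * ∑ i, U i ω * c i|} = {ω | ε < |S ω|} := by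
    ext ω
    simp only [Set.mem_setOf_eq]
    have heq : a + b * ((1 / (n : ℝ)) * ∑ i, c i) = ε / n := by
      rw [hε_def, hC_def]; field_simp
    rw [← hSapp ω, abs_mul, abs_of_pos (by positivity : (0 : ℝ) < 1 / n), heq,
      one_div, inv_mul_eq_div]
    exact div_lt_div_iff_of_pos_right hn'
  rw [hevent]
  -- trivial case: all weights zero
  by_cases hC : C = 0
  · have hC' : ∑ i, c i = 0 := hC
    have hc_all : ∀ i, c i = 0 := fun i =>
      (Finset.sum_eq_zero_iff_of_nonneg (fun i _ => hc0 i)).mp hC' i (Finset.mem_univ i)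
    have : {ω | ε < |S ω|} = ∅ := by
      ext ω
      simp only [Set.mem_setOf_eq, Set.mem_empty_iff_false, iff_false, not_lt]
      rw [hSapp]
      simp [hc_all]
      exact hεpos.le
    rw [this]
    simp
  -- main case
  have hCpos : 0 < C := lt_of_le_of_ne (Finset.sum_nonneg fun i _ => hc0 i) (Ne.symm hC)
  obtain ⟨j, hj⟩ : ∃ j, 0 < c j := by
    by_contra h
    push_neg at h
    have : C ≤ 0 := Finset.sum_nonpos fun i _ => h i
    linarith
  set C2 : ℝ := ∑ i, (c i) ^ 2 with hC2_def
  have hC2pos : 0 < C2 :=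
    Finset.sum_pos' (fun i _ => sq_nonneg _) ⟨j, Finset.mem_univ j, by positivity⟩
  have hC2M : C2 ≤ M * C := by
    rw [hC2_def, hC_def, Finset.mul_sum]
    refine Finset.sum_le_sum fun i _ => ?_
    have := hc0 i
    have := hcM i
    nlinarith
  set t : ℝ := ε / C2 with ht_def
  have htpos : 0 < t := div_pos hεpos hC2pos
  -- mgf computations
  have hint : ∀ s : ℝ, ∀ i, Integrable (fun ω => Real.exp (s * X i ω)) μ := fun s i =>
    (radem_exp_int μ (U i) (hmeas i) (hrad i).1 (hrad i).2 (c i) s).1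
  have hmgfX : ∀ s : ℝ, ∀ i, mgf (X i) μ s = Real.cosh (s * c i) := fun s i =>
    (radem_exp_int μ (U i) (hmeas i) (hrad i).1 (hrad i).2 (c i) s).2
  have hintS : ∀ s : ℝ, Integrable (fun ω => Real.exp (s * S ω)) μ := fun s =>
    hXindep.integrable_exp_mul_sum hXmeas fun i _ => hint s i
  have hmgfS : ∀ s : ℝ, mgf S μ s ≤ Real.exp (s ^ 2 / 2 * C2) := by
    intro s
    rw [hS_def, hXindep.mgf_sum hXmeas]
    calc ∏ i, mgf (X i) μ s = ∏ i, Real.cosh (s * c i) := by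
          exact Finset.prod_congr rfl fun i _ => hmgfX s i
      _ ≤ ∏ i, Real.exp ((s * c i) ^ 2 / 2) := by
          refine Finset.prod_le_prod (fun i _ => (Real.cosh_pos _).le) fun i _ =>
            Real.cosh_le_exp_half_sq _
      _ = Real.exp (∑ i, (s * c i) ^ 2 / 2) := by rw [Real.exp_sum]
      _ = Real.exp (s ^ 2 / 2 * C2) := by
          congr 1
          rw [hC2_def, Finset.mul_sum]
          exact Finset.sum_congr rfl fun i _ => by ring
  have hb1 : -t * ε + t ^ 2 / 2 * C2 = -(ε ^ 2) / (2 * C2) := by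
    rw [ht_def]; field_simp; ring
  have hup : (μ {ω | ε ≤ S ω}).toReal ≤ Real.exp (-(ε ^ 2) / (2 * C2)) := by
    calc (μ {ω | ε ≤ S ω}).toReal ≤ Real.exp (-t * ε) * mgf S μ t :=
          measure_ge_le_exp_mul_mgf ε htpos.le (hintS t)
      _ ≤ Real.exp (-t * ε) * Real.exp (t ^ 2 / 2 * C2) := by
          exact mul_le_mul_of_nonneg_left (hmgfS t) (Real.exp_pos _).le
      _ = Real.exp (-(ε ^ 2) / (2 * C2)) := by rw [← Real.exp_add, hb1]
  have hdown : (μ {ω | S ω ≤ -ε}).toReal ≤ Real.exp (-(ε ^ 2) / (2 * C2)) := by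
    calc (μ {ω | S ω ≤ -ε}).toReal ≤ Real.exp (-(-t) * -ε) * mgf S μ (-t) :=
          measure_le_le_exp_mul_mgf (-ε) (neg_nonpos_of_nonneg htpos.le) (hintS (-t))
      _ ≤ Real.exp (-t * ε) * Real.exp ((-t) ^ 2 / 2 * C2) := by
          rw [show -(-t) * -ε = -t * ε by ring]
          exact mul_le_mul_of_nonneg_left (hmgfS (-t)) (Real.exp_pos _).le
      _ = Real.exp (-(ε ^ 2) / (2 * C2)) := by
          rw [← Real.exp_add, show (-t) ^ 2 = t ^ 2 by ring, hb1]
  -- exponent comparison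
  have hexp_le : Real.exp (-(ε ^ 2) / (2 * C2)) ≤ Real.exp (-(2 * n * a * b) / M) := by
    apply Real.exp_le_exp.mpr
    rw [neg_div, neg_div, neg_le_neg_iff, div_le_div_iff₀ hM (by positivity)]
    have hε2 : 4 * (n * a) * (b * C) ≤ ε ^ 2 := by
      rw [hε_def]; nlinarith [sq_nonneg (n * a - b * C)]
    nlinarith [mul_pos hn' ha, mul_pos hb hCpos, mul_le_mul_of_nonneg_left hC2M
      (by positivity : (0 : ℝ) ≤ 2 * (2 * n * a * b))]
  -- combine
  have hsub : {ω | ε < |S ω|} ⊆ {ω | ε ≤ S ω} ∪ {ω | S ω ≤ -ε} := by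
    intro ω hω
    simp only [Set.mem_setOf_eq, Set.mem_union] at hω ⊢
    rcases lt_abs.mp hω with h | h
    · exact Or.inl h.le
    · exact Or.inr (by linarith)
  have hfin : μ {ω | ε < |S ω|} ≠ ⊤ := measure_ne_top μ _
  rw [ENNReal.le_ofReal_iff_toReal_le hfin (by positivity)]
  calc (μ {ω | ε < |S ω|}).toReal
      ≤ (μ ({ω | ε ≤ S ω} ∪ {ω | S ω ≤ -ε})).toReal := by
        exact ENNReal.toReal_mono (measure_ne_top μ _) (measure_mono hsub)
    _ ≤ ((μ {ω | ε ≤ S ω}) + μ {ω | S ω ≤ -ε}).toReal := by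
        exact ENNReal.toReal_mono (by finiteness) (measure_union_le _ _)
    _ = (μ {ω | ε ≤ S ω}).toReal + (μ {ω | S ω ≤ -ε}).toReal :=
        ENNReal.toReal_add (measure_ne_top μ _) (measure_ne_top μ _)
    _ ≤ Real.exp (-(ε ^ 2) / (2 * C2)) + Real.exp (-(ε ^ 2) / (2 * C2)) := add_le_add hup hdown
    _ = 2 * Real.exp (-(ε ^ 2) / (2 * C2)) := by ring
    _ ≤ 2 * Real.exp (-(2 * n * a * b) / M) := by linarith
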